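/- Let T be a positive self-adjoint element of a unital C*-algebra B. Then the Bochner integral (2/π)∫₀^∞ T(1 + t²T)^{-1} dt converges absolutely and equals √T (the positive square root of T given by continuous functional calculus). -/

import Mathlib

open MeasureTheory

open Real in
theorem scalar_int (r : ℝ) (hr : 0 < r) :
    ∫ t in Set.Ioi (0:ℝ), r / (1 + t ^ 2 * r) = π / 2 * Real.sqrt r := by
  set c := Real.sqrt r with hc
  have hc0 : 0 < c := Real.sqrt_pos.mpr hr
  have hcsq : c ^ 2 = r := Real.sq_sqrt hr.le
  have key : ∀ t : ℝ, r / (1 + t ^ 2 * r) = (fun u : ℝ => r * (1 + u ^ 2)⁻¹) (c * t) := by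
    intro t
    simp only
    rw [mul_pow, hcsq, div_eq_mul_inv, mul_comm r (t ^ 2)]
  calc ∫ t in Set.Ioi (0:ℝ), r / (1 + t ^ 2 * r)
      = ∫ t in Set.Ioi (0:ℝ), (fun u : ℝ => r * (1 + u ^ 2)⁻¹) (c * t) :=
        integral_congr_ae (.of_forall fun t => key t)
    _ = c⁻¹ • ∫ u in Set.Ioi (c * 0), r * (1 + u ^ 2)⁻¹ :=
        MeasureTheory.integral_comp_mul_left_Ioi (fun u : ℝ => r * (1 + u ^ 2)⁻¹) 0 hc0
    _ = π / 2 * c := by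
        rw [mul_zero, MeasureTheory.integral_const_mul, integral_Ioi_inv_one_add_sq]
        rw [Real.arctan_zero, sub_zero, smul_eq_mul, ← hcsq]
        field_simp


/-- Let `T` be a positive self-adjoint element of a unital C⋆-algebra `B`.  Then the
Bochner integral `(2/π)∫₀^∞ T(1 + t²T)⁻¹ dt` converges absolutely and equals `√T`
(the positive square root given by the continuous functional calculus). -/
theorem integral_resolvent_eq_sqrt {B : Type*} [CStarAlgebra B]
    [PartialOrder B] [StarOrderedRing B]
    (T : B) (hTsa : IsSelfAdjoint T) (hT : 0 ≤ T) :
    IntegrableOn (fun t : ℝ => cfc (fun x : ℝ => x / (1 + t ^ 2 * x)) T) (Set.Ioi 0) ∧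
      (2 / Real.pi) • ∫ t in Set.Ioi (0 : ℝ), cfc (fun x : ℝ => x / (1 + t ^ 2 * x)) T
        = cfc Real.sqrt T := by
  obtain hB | hB := subsingleton_or_nontrivial B
  · refine ⟨?_, Subsingleton.elim _ _⟩
    have h0 : (fun t : ℝ => cfc (fun x : ℝ => x / (1 + t ^ 2 * x)) T) = fun _ => (0 : B) :=
      funext fun _ => Subsingleton.elim _ _
    rw [h0]
    exact (integrable_zero ℝ B _).integrableOn
  set M := ‖T‖ with hM
  have hMnn : (0:ℝ) ≤ M := norm_nonneg T
  have hspec0 : ∀ x ∈ spectrum ℝ T, (0:ℝ) ≤ x := fun x hx => spectrum_nonneg_of_nonneg hT hx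
  have hspecM : ∀ x ∈ spectrum ℝ T, x ≤ M := fun x hx =>
    (le_abs_self x).trans (spectrum.norm_le_norm_of_mem hx)
  -- pointwise bound
  have hbd : ∀ (t x : ℝ), x ∈ spectrum ℝ T →
      ‖x / (1 + t ^ 2 * x)‖ ≤ M / (1 + t ^ 2 * M) := by
    intro t x hx
    have hx0 := hspec0 x hx
    have hxM := hspecM x hx
    have h1 : (0:ℝ) < 1 + t ^ 2 * x := by positivity
    have h2 : (0:ℝ) < 1 + t ^ 2 * M := by positivity
    rw [Real.norm_eq_abs, abs_of_nonneg (div_nonneg hx0 h1.le), div_le_div_iff₀ h1 h2]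
    nlinarith [sq_nonneg t]
  -- integrability of bound
  have hboundInt : Integrable (fun t : ℝ => M / (1 + t ^ 2 * M)) := by
    rcases eq_or_lt_of_le hMnn with h | h
    · simpa [← h] using integrable_zero ℝ ℝ (volume : Measure ℝ)
    · have heq : (fun t : ℝ => M / (1 + t ^ 2 * M))
          = fun t => M * (1 + (Real.sqrt M * t) ^ 2)⁻¹ := by
        funext t
        rw [mul_pow, Real.sq_sqrt hMnn, div_eq_mul_inv, mul_comm M (t ^ 2)]
      rw [heq]
      exact (integrable_inv_one_add_sq.comp_mul_left'
        (Real.sqrt_pos.mpr h).ne').const_mul M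
  -- continuity of uncurried family
  have hf : Continuous (Function.uncurry fun t : ℝ =>
      (spectrum ℝ T).restrict fun x : ℝ => x / (1 + t ^ 2 * x)) := by
    have : (Function.uncurry fun t : ℝ =>
        (spectrum ℝ T).restrict fun x : ℝ => x / (1 + t ^ 2 * x))
        = fun p : ℝ × spectrum ℝ T => (p.2 : ℝ) / (1 + p.1 ^ 2 * (p.2 : ℝ)) := rfl
    rw [this]
    refine Continuous.div (continuous_subtype_val.comp continuous_snd)
      (continuous_const.add ((continuous_fst.pow 2).mul
        (continuous_subtype_val.comp continuous_snd))) fun p => ?_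
    have := hspec0 p.2 p.2.2
    positivity
  have hbound' : ∀ t : ℝ, ∀ z ∈ spectrum ℝ T,
      ‖z / (1 + t ^ 2 * z)‖ ≤ ‖M / (1 + t ^ 2 * M)‖ :=
    fun t z hz => (hbd t z hz).trans (le_abs_self _)
  have key := cfc_integral (μ := (volume : Measure ℝ).restrict (Set.Ioi 0))
    (fun t x => x / (1 + t ^ 2 * x)) (fun t => M / (1 + t ^ 2 * M)) T
    (by
      show ContinuousOn (fun p : ℝ × ℝ => p.2 / (1 + p.1 ^ 2 * p.2)) _
      refine ContinuousOn.div (by fun_prop) (by fun_prop) ?_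
      rintro ⟨t, x⟩ ⟨-, hx⟩
      have := hspec0 x hx
      dsimp only
      positivity)
    (.of_forall hbd)
    (hboundInt.restrict (s := Set.Ioi 0)).2 hTsa
  -- continuity of the integrand in B
  have hcont : Continuous fun t : ℝ => cfc (fun x : ℝ => x / (1 + t ^ 2 * x)) T := by
    have h1 : ∀ t : ℝ, ContinuousOn (fun x : ℝ => x / (1 + t ^ 2 * x)) (spectrum ℝ T) :=
      fun t => continuousOn_iff_continuous_restrict.mpr (hf.uncurry_left t)
    have heq : (fun t : ℝ => cfc (fun x : ℝ => x / (1 + t ^ 2 * x)) T)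
        = fun t => cfcL (a := T) hTsa ((ContinuousMap.curry ⟨_, hf⟩) t) := by
      funext t
      rw [cfc_apply _ _ hTsa (h1 t)]
      rfl
    rw [heq]
    exact (cfcL (a := T) hTsa).continuous.comp (ContinuousMap.curry ⟨_, hf⟩).continuous
  have hInt : IntegrableOn (fun t : ℝ => cfc (fun x : ℝ => x / (1 + t ^ 2 * x)) T)
      (Set.Ioi 0) :=
    (hboundInt.restrict (s := Set.Ioi 0)).mono'
      (hcont.aestronglyMeasurable.restrict)
      (ae_of_all _ fun t => norm_cfc_le (by positivity) fun x hx => hbd t x hx)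
  refine ⟨hInt, ?_⟩
  rw [← key]
  have h1 : cfc (fun r : ℝ => ∫ t in Set.Ioi (0:ℝ), r / (1 + t ^ 2 * r)) T
      = cfc (fun r : ℝ => Real.pi / 2 * Real.sqrt r) T := by
    refine cfc_congr fun r hr => ?_
    rcases (hspec0 r hr).eq_or_lt with h | h
    · simp [← h]
    · exact scalar_int r h
  rw [h1, ← cfc_smul (2 / Real.pi) _ T]
  refine cfc_congr fun r _ => ?_
  have hπ : Real.pi ≠ 0 := Real.pi_ne_zero
  field_simp
  rw [smul_eq_mul]
  field_simp
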